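/- Let d, s ≥ 0 and N ≥ 1 be integers, let c_n = Σ_{k=0}^{d} (-1)^{k-n} binom(-s,k) binom(k,n), and work in A = C[x]/(x^{d+1}) with y = 1 - (1+x)^{-N}. Then Σ_{j=0}^{d} (Σ_{n=0}^{d} c_n · binom(j + (s+n)/N, j)) · y^j = Σ_{j=0}^{d} y^j in A. -/

import Mathlib

abbrev Atrunc (d : ℕ) : Type :=
  Polynomial ℂ ⧸ Ideal.span {(Polynomial.X : Polynomial ℂ) ^ (d + 1)}

noncomputable def xbar (d : ℕ) : Atrunc d := Ideal.Quotient.mk _ Polynomial.X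

/-- The generalized binomial coefficient `α(α-1)⋯(α-d+1)/d!` for rational `α`. -/
noncomputable def genChoose (α : ℚ) (d : ℕ) : ℚ :=
  (∏ i ∈ Finset.range d, (α - i)) / d.factorial

open Polynomial Finset

lemma gc_zero (α : ℚ) : genChoose α 0 = 1 := by simp [genChoose]

lemma gc_nat_le (a k : ℕ) (h : k ≤ a) : genChoose (a : ℚ) k = a.choose k := by
  have hp : (∏ i ∈ Finset.range k, ((a : ℚ) - i)) = (a.descFactorial k : ℚ) := by
    rw [Nat.descFactorial_eq_prod_range, Nat.cast_prod]
    refine Finset.prod_congr rfl fun i hi => ?_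
    rw [Nat.cast_sub (le_trans (le_of_lt (Finset.mem_range.1 hi)) h)]
  rw [genChoose, hp, Nat.descFactorial_eq_factorial_mul_choose, Nat.cast_mul,
    mul_comm, mul_div_assoc, div_self (Nat.cast_ne_zero.2 (Nat.factorial_ne_zero k)), mul_one]

lemma gc_pascal (γ : ℚ) (k : ℕ) :
    genChoose (γ + 1) (k + 1) = genChoose γ (k + 1) + genChoose γ k := by
  have h1 : (∏ i ∈ Finset.range (k+1), ((γ:ℚ) + 1 - i)) =
      (γ + 1) * ∏ i ∈ Finset.range k, (γ - i) := by
    rw [Finset.prod_range_succ']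
    simp only [Nat.cast_add, Nat.cast_one, Nat.cast_zero]
    rw [mul_comm]
    congr 1
    · ring
    refine Finset.prod_congr rfl fun i _ => by ring
  have h2 : (∏ i ∈ Finset.range (k+1), ((γ:ℚ) - i)) =
      (∏ i ∈ Finset.range k, (γ - i)) * (γ - k) := Finset.prod_range_succ _ _
  have hk : ((k+1).factorial : ℚ) = (k+1) * k.factorial := by
    rw [Nat.factorial_succ]; push_cast; ring
  have hkf : (k.factorial : ℚ) ≠ 0 := Nat.cast_ne_zero.2 (Nat.factorial_ne_zero k)
  have hk1 : ((k:ℚ)+1) ≠ 0 := by positivity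
  rw [genChoose, genChoose, genChoose, h1, h2, hk]
  field_simp
  ring

lemma gc_nat (a k : ℕ) : genChoose (a : ℚ) k = a.choose k := by
  rcases le_or_gt k a with h | h
  · exact gc_nat_le a k h
  · rw [Nat.choose_eq_zero_of_lt h, genChoose,
      Finset.prod_eq_zero (Finset.mem_range.2 h) (by simp), zero_div, Nat.cast_zero]

lemma gc_zero_left (k : ℕ) : genChoose 0 (k + 1) = 0 := by
  rw [genChoose, Finset.prod_eq_zero (Finset.mem_range.2 (Nat.succ_pos k)) (by simp), zero_div]

noncomputable abbrev qmk (d : ℕ) : Polynomial ℂ →+* Atrunc d :=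
  Ideal.Quotient.mk (Ideal.span {(X : Polynomial ℂ) ^ (d + 1)})

lemma qmk_X (d : ℕ) : qmk d X = xbar d := rfl

lemma xbar_pow_eq_zero (d : ℕ) : (xbar d) ^ (d + 1) = 0 := by
  show qmk d X ^ (d+1) = 0
  rw [← map_pow, Ideal.Quotient.eq_zero_iff_mem]
  exact Ideal.subset_span rfl

lemma mk_coeff {d : ℕ} {p q : Polynomial ℂ} (h : qmk d p = qmk d q) {m : ℕ} (hm : m ≤ d) :
    p.coeff m = q.coeff m := by
  have h1 := Ideal.Quotient.eq.1 h
  rw [Ideal.mem_span_singleton] at h1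
  have h2 := Polynomial.X_pow_dvd_iff.1 h1 m (Nat.lt_succ_of_le hm)
  rw [Polynomial.coeff_sub, sub_eq_zero] at h2
  exact h2

lemma mk_eq_of_coeff {d : ℕ} {p q : Polynomial ℂ} (h : ∀ m ≤ d, p.coeff m = q.coeff m) :
    qmk d p = qmk d q := by
  rw [Ideal.Quotient.eq, Ideal.mem_span_singleton, Polynomial.X_pow_dvd_iff]
  intro i hi
  rw [Polynomial.coeff_sub, sub_eq_zero]
  exact h i (Nat.lt_succ_iff.1 hi)

lemma trunc_mul {R : Type*} [CommRing R] (d : ℕ) (t : R) (ht : t ^ (d + 1) = 0) (a : ℕ → R) :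
    (∑ i ∈ range (d+1), a i * t ^ i) * (∑ j ∈ range (d+1), t ^ j)
      = ∑ m ∈ range (d+1), (∑ k ∈ range (m+1), a k) * t ^ m := by
  have hzero : ∀ n, d + 1 ≤ n → t ^ n = 0 := fun n hn => by
    rw [← Nat.sub_add_cancel hn, pow_add, ht, mul_zero]
  calc (∑ i ∈ range (d+1), a i * t ^ i) * (∑ j ∈ range (d+1), t ^ j)
      = ∑ x ∈ (range (d+1)) ×ˢ (range (d+1)), a x.1 * t ^ (x.1 + x.2) := by
        rw [Finset.sum_mul_sum, Finset.sum_product]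
        exact Finset.sum_congr rfl fun i _ => Finset.sum_congr rfl fun j _ => by
          rw [pow_add, mul_assoc]
    _ = ∑ x ∈ ((range (d+1)) ×ˢ (range (d+1))).filter (fun x => x.1 + x.2 ≤ d),
          a x.1 * t ^ (x.1 + x.2) := by
        rw [Finset.sum_filter_of_ne]
        intro x _ hfx
        by_contra hx
        exact hfx (by rw [hzero _ (by omega), mul_zero])
    _ = ∑ x ∈ (range (d+1)).sigma (fun m => range (m+1)), a x.2 * t ^ x.1 := by
        refine Finset.sum_nbij' (fun x => ⟨x.1 + x.2, x.1⟩) (fun x => (x.2, x.1 - x.2)) ?_ ?_ ?_ ?_ ?_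
        · intro x hx
          simp only [Finset.mem_filter, Finset.mem_product, Finset.mem_range] at hx
          simp only [Finset.mem_sigma, Finset.mem_range]
          omega
        · intro x hx
          simp only [Finset.mem_sigma, Finset.mem_range] at hx
          simp only [Finset.mem_filter, Finset.mem_product, Finset.mem_range]
          omega
        · intro x hx
          simp only [Finset.mem_filter, Finset.mem_product, Finset.mem_range] at hx
          simp
        · rintro ⟨m, k⟩ hx
          simp only [Finset.mem_sigma, Finset.mem_range] at hx
          dsimp only
          rw [Nat.add_sub_cancel' (Nat.lt_succ_iff.1 hx.2)]
        · intro x hx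
          simp only [Finset.mem_filter, Finset.mem_product, Finset.mem_range] at hx
          rfl
    _ = ∑ m ∈ range (d+1), (∑ k ∈ range (m+1), a k) * t ^ m := by
        rw [Finset.sum_sigma]
        exact Finset.sum_congr rfl fun m _ => by rw [Finset.sum_mul]

lemma hockey (b m : ℕ) : ∑ k ∈ range (m+1), (k+b).choose k = (m+b+1).choose m := by
  induction m with
  | zero => simp
  | succ m ih =>
    rw [Finset.sum_range_succ, ih, show m+1+b = m+b+1 from by ring]
    exact (Nat.choose_succ_succ _ _).symm

section
variable {d N : ℕ}

lemma hPunit : IsUnit ((1 + xbar d) ^ N) :=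
  (IsNilpotent.isUnit_one_add ⟨d+1, xbar_pow_eq_zero d⟩).pow N

lemma ynil (y : Atrunc d) (hy : y = 1 - Ring.inverse ((1 + xbar d) ^ N)) :
    y ^ (d + 1) = 0 := by
  have hdvd : (X : Polynomial ℂ) ∣ ((1 + X : Polynomial ℂ) ^ N - 1) := by
    rw [Polynomial.X_dvd_iff, Polynomial.coeff_sub, Polynomial.coeff_one_add_X_pow]
    simp
  obtain ⟨h, hh⟩ := hdvd
  have hP : (1 + xbar d) ^ N = qmk d ((1 + X) ^ N) := by
    rw [map_pow, map_add, map_one, qmk_X]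
  have hy2 : y = Ring.inverse ((1 + xbar d) ^ N) * (xbar d * qmk d h) := by
    have h1 : (1 + xbar d) ^ N - 1 = xbar d * qmk d h := by
      rw [hP, ← qmk_X d, ← map_mul, ← hh, map_sub, map_one]
    rw [hy, ← h1, mul_sub, Ring.inverse_mul_cancel _ (hPunit (d := d) (N := N)), mul_one]
  rw [hy2, mul_pow, mul_pow, xbar_pow_eq_zero]
  ring

lemma main_nat (y : Atrunc d) (hy : y = 1 - Ring.inverse ((1 + xbar d) ^ N)) (b : ℕ) :
    ∑ j ∈ range (d+1), (((j+b).choose j : ℕ) : Atrunc d) * y ^ j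
      = ((1 + xbar d) ^ N) ^ (b+1) := by
  set P := (1 + xbar d) ^ N with hPdef
  have hP : IsUnit P := hPunit
  have h1y : (1 : Atrunc d) - y = Ring.inverse P := by rw [hy, sub_sub_cancel]
  have hPy : P * (1 - y) = 1 := by rw [h1y]; exact Ring.mul_inverse_cancel _ hP
  have hynil : y ^ (d+1) = 0 := ynil y hy
  have hS0 : ∑ j ∈ range (d+1), y ^ j = P := by
    have hg : (∑ j ∈ range (d+1), y ^ j) * (1 - y) = 1 := by
      have := geom_sum_mul y (d+1)
      have h2 : (∑ j ∈ range (d+1), y ^ j) * (y - 1) = -1 := by rw [this, hynil]; ring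
      calc (∑ j ∈ range (d+1), y ^ j) * (1 - y)
          = -((∑ j ∈ range (d+1), y ^ j) * (y - 1)) := by ring
        _ = 1 := by rw [h2]; ring
    calc ∑ j ∈ range (d+1), y ^ j
        = (∑ j ∈ range (d+1), y ^ j) * (P * (1 - y)) := by rw [hPy, mul_one]
      _ = P * ((∑ j ∈ range (d+1), y ^ j) * (1 - y)) := by ring
      _ = P := by rw [hg, mul_one]
  induction b with
  | zero =>
    simp only [Nat.add_zero, Nat.choose_self, Nat.cast_one, one_mul, zero_add, pow_one]
    exact hS0
  | succ b ih =>
    have key := trunc_mul d y hynil (fun k => (((k+b).choose k : ℕ) : Atrunc d))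
    rw [hS0] at key
    have hsum : ∀ m, (∑ k ∈ range (m+1), (((k+b).choose k : ℕ) : Atrunc d))
        = (((m+(b+1)).choose m : ℕ) : Atrunc d) := by
      intro m
      rw [← Nat.cast_sum, hockey, show m+b+1 = m+(b+1) from by ring]
    calc ∑ j ∈ range (d+1), (((j+(b+1)).choose j : ℕ) : Atrunc d) * y ^ j
        = ∑ m ∈ range (d+1), (∑ k ∈ range (m+1), (((k+b).choose k : ℕ) : Atrunc d)) * y ^ m := by
          exact Finset.sum_congr rfl fun m _ => by rw [hsum]
      _ = (∑ i ∈ range (d+1), (((i+b).choose i : ℕ) : Atrunc d) * y ^ i) * P := by rw [key]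
      _ = P ^ (b+1) * P := by rw [ih]
      _ = P ^ (b+1+1) := (pow_succ P (b+1)).symm

end

lemma gc_cast (α : ℚ) (k : ℕ) :
    ((genChoose α k : ℚ) : ℂ) = (∏ i ∈ range k, ((α : ℂ) - i)) * (k.factorial : ℂ)⁻¹ := by
  rw [genChoose, div_eq_mul_inv]
  push_cast
  ring

noncomputable def Ppoly (j : ℕ) : Polynomial ℂ :=
  Polynomial.C ((j.factorial : ℂ)⁻¹) * ∏ i ∈ range j, (X + (Polynomial.C (j : ℂ) - Polynomial.C (i : ℂ)))

noncomputable def Rpoly (N m : ℕ) : Polynomial ℂ :=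
  Polynomial.C ((m.factorial : ℂ)⁻¹) *
    ∏ i ∈ range m, (Polynomial.C (N : ℂ) * X + (Polynomial.C (N : ℂ) - Polynomial.C (i : ℂ)))

lemma Ppoly_eval (j : ℕ) (β : ℚ) :
    (Ppoly j).eval ((β : ℚ) : ℂ) = ((genChoose ((j : ℚ) + β) j : ℚ) : ℂ) := by
  rw [gc_cast, Ppoly]
  simp only [Polynomial.eval_mul, Polynomial.eval_C, Polynomial.eval_prod, Polynomial.eval_add,
    Polynomial.eval_sub, Polynomial.eval_X]
  rw [mul_comm]
  congr 1
  refine Finset.prod_congr rfl fun i _ => ?_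
  push_cast
  ring

lemma Rpoly_eval (N m : ℕ) (β : ℚ) :
    (Rpoly N m).eval ((β : ℚ) : ℂ) = ((genChoose ((N : ℚ) * β + N) m : ℚ) : ℂ) := by
  rw [gc_cast, Rpoly]
  simp only [Polynomial.eval_mul, Polynomial.eval_C, Polynomial.eval_prod, Polynomial.eval_add,
    Polynomial.eval_sub, Polynomial.eval_X]
  rw [mul_comm]
  congr 1
  refine Finset.prod_congr rfl fun i _ => ?_
  push_cast
  ring

section
variable {d N : ℕ}

lemma extraction (y : Atrunc d) (hy : y = 1 - Ring.inverse ((1 + xbar d) ^ N))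
    (qc : Polynomial ℂ) (hqc : qmk d qc = y) (b : ℕ) {m : ℕ} (hm : m ≤ d) :
    ∑ j ∈ range (d+1), (((j+b).choose j : ℕ) : ℂ) * (qc ^ j).coeff m
      = ((N*(b+1)).choose m : ℂ) := by
  have hmk : qmk d (∑ j ∈ range (d+1), Polynomial.C (((j+b).choose j : ℕ) : ℂ) * qc ^ j)
      = qmk d ((1 + X) ^ (N*(b+1))) := by
    rw [map_sum]
    have h1 : ∀ j, qmk d (Polynomial.C (((j+b).choose j : ℕ) : ℂ) * qc ^ j)
        = (((j+b).choose j : ℕ) : Atrunc d) * y ^ j := by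
      intro j
      rw [map_mul, map_pow, hqc, Polynomial.C_eq_natCast, map_natCast]
    simp_rw [h1]
    rw [main_nat y hy b, map_pow, map_add, map_one, qmk_X, ← pow_mul]
  have hc := mk_coeff hmk hm
  rw [Polynomial.finset_sum_coeff] at hc
  simp_rw [Polynomial.coeff_C_mul] at hc
  rw [hc, Polynomial.coeff_one_add_X_pow]

lemma coeff_key (y : Atrunc d) (hy : y = 1 - Ring.inverse ((1 + xbar d) ^ N))
    (qc : Polynomial ℂ) (hqc : qmk d qc = y) {m : ℕ} (hm : m ≤ d) (β : ℚ) :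
    ∑ j ∈ range (d+1), ((genChoose ((j : ℚ) + β) j : ℚ) : ℂ) * (qc ^ j).coeff m
      = ((genChoose ((N : ℚ) * β + N) m : ℚ) : ℂ) := by
  set Lp : Polynomial ℂ := ∑ j ∈ range (d+1), Polynomial.C ((qc ^ j).coeff m) * Ppoly j with hLp
  have hLeval : ∀ β : ℚ, Lp.eval ((β : ℚ) : ℂ)
      = ∑ j ∈ range (d+1), ((genChoose ((j : ℚ) + β) j : ℚ) : ℂ) * (qc ^ j).coeff m := by
    intro γ
    rw [hLp, Polynomial.eval_finset_sum]
    exact Finset.sum_congr rfl fun j _ => by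
      rw [Polynomial.eval_mul, Polynomial.eval_C, Ppoly_eval, mul_comm]
  have heq : Lp = Rpoly N m := by
    apply Polynomial.eq_of_infinite_eval_eq
    apply Set.Infinite.mono (s := Set.range (Nat.cast : ℕ → ℂ))
    · rintro _ ⟨b, rfl⟩
      have hb : ((b : ℂ)) = (((b : ℚ) : ℚ) : ℂ) := by push_cast; rfl
      simp only [Set.mem_setOf_eq]
      rw [hb, hLeval, Rpoly_eval]
      have h2 : ((genChoose ((N : ℚ) * (b:ℚ) + N) m : ℚ) : ℂ) = ((N*(b+1)).choose m : ℂ) := by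
        rw [show ((N : ℚ) * (b:ℚ) + N) = ((N*(b+1) : ℕ) : ℚ) from by push_cast; ring, gc_nat]
        push_cast
        rfl
      rw [h2, ← extraction y hy qc hqc b hm]
      refine Finset.sum_congr rfl fun j _ => ?_
      congr 2
      rw [show ((j : ℚ) + (b:ℚ)) = ((j+b : ℕ) : ℚ) from by push_cast; ring, gc_nat]
      push_cast
      rfl
    · exact Set.infinite_range_of_injective Nat.cast_injective
  rw [← hLeval, heq, Rpoly_eval]

end

section
variable {d N : ℕ}

lemma Tn (y : Atrunc d) (hy : y = 1 - Ring.inverse ((1 + xbar d) ^ N))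
    (qc : Polynomial ℂ) (hqc : qmk d qc = y) (β : ℚ) (M : ℕ)
    (hβ : (N : ℚ) * β + N = (M : ℚ)) :
    ∑ j ∈ range (d+1), algebraMap ℂ (Atrunc d) ((genChoose ((j : ℚ) + β) j : ℚ) : ℂ) * y ^ j
      = (1 + xbar d) ^ M := by
  have h1 : ∑ j ∈ range (d+1),
      algebraMap ℂ (Atrunc d) ((genChoose ((j : ℚ) + β) j : ℚ) : ℂ) * y ^ j
      = qmk d (∑ j ∈ range (d+1), Polynomial.C ((genChoose ((j : ℚ) + β) j : ℚ) : ℂ) * qc ^ j) := by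
    rw [map_sum]
    exact Finset.sum_congr rfl fun j _ => by
      rw [map_mul, map_pow, hqc, ← Ideal.Quotient.mk_algebraMap]
      rfl
  have h2 : (1 + xbar d) ^ M = qmk d ((1 + X) ^ M) := by
    rw [map_pow, map_add, map_one, qmk_X]
  rw [h1, h2]
  apply mk_eq_of_coeff
  intro m hm
  rw [Polynomial.finset_sum_coeff]
  simp_rw [Polynomial.coeff_C_mul]
  rw [coeff_key y hy qc hqc hm β, hβ, gc_nat, Polynomial.coeff_one_add_X_pow]
  push_cast
  rfl

noncomputable def Epoly (d : ℕ) (α : ℚ) : Polynomial ℂ :=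
  ∑ k ∈ range (d+1), Polynomial.C ((genChoose α k : ℚ) : ℂ) * X ^ k

lemma Epoly_coeff (α : ℚ) {m : ℕ} (hm : m ≤ d) :
    (Epoly d α).coeff m = ((genChoose α m : ℚ) : ℂ) := by
  rw [Epoly, Polynomial.finset_sum_coeff]
  rw [Finset.sum_eq_single m]
  · rw [Polynomial.coeff_C_mul, Polynomial.coeff_X_pow, if_pos rfl, mul_one]
  · intro k _ hk
    rw [Polynomial.coeff_C_mul, Polynomial.coeff_X_pow, if_neg (fun hr => hk hr.symm), mul_zero]
  · intro hmem
    exact absurd (Finset.mem_range.2 (Nat.lt_succ_of_le hm)) hmem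

lemma Epoly_zero : Epoly d 0 = 1 := by
  rw [Epoly, Finset.sum_eq_single 0]
  · simp [gc_zero]
  · intro k _ hk0
    obtain ⟨k, rfl⟩ := Nat.exists_eq_succ_of_ne_zero hk0
    simp [gc_zero_left]
  · intro hmem
    exact absurd (Finset.mem_range.2 (Nat.succ_pos d)) hmem

lemma Epascal (α : ℚ) :
    qmk d (Epoly d α) * (1 + xbar d) = qmk d (Epoly d (α + 1)) := by
  have h2 : (1 + xbar d) = qmk d (1 + X) := by rw [map_add, map_one, qmk_X]
  rw [h2, ← map_mul]
  apply mk_eq_of_coeff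
  intro m hm
  rw [mul_add, mul_one, Polynomial.coeff_add]
  rcases m with _ | k
  · rw [Polynomial.coeff_mul_X_zero, add_zero, Epoly_coeff _ (Nat.zero_le d),
      Epoly_coeff _ (Nat.zero_le d), gc_zero, gc_zero]
  · rw [Polynomial.coeff_mul_X, Epoly_coeff _ hm, Epoly_coeff _ (le_trans (Nat.le_succ k) hm),
      Epoly_coeff _ hm, gc_pascal]
    push_cast
    ring

lemma Epow (t : ℕ) : qmk d (Epoly d (-(t : ℚ))) * (1 + xbar d) ^ t = 1 := by
  induction t with
  | zero =>
    rw [pow_zero, mul_one, show (-(0:ℕ) : ℚ) = 0 from by push_cast; ring, Epoly_zero, map_one]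
  | succ t ih =>
    have hp : (1 + xbar d) ^ (t+1) = (1 + xbar d) * (1 + xbar d) ^ t := pow_succ' _ _
    rw [hp, ← mul_assoc, Epascal]
    rw [show (-((t+1:ℕ) : ℚ) + 1 : ℚ) = -(t : ℚ) from by push_cast; ring]
    exact ih

end

lemma inner_sub (d k : ℕ) (hk : k ≤ d) :
    ∑ n ∈ range (d+1),
        algebraMap ℂ (Atrunc d) ((((-1:ℚ) ^ ((k:ℤ) - (n:ℤ)) * (k.choose n : ℚ) : ℚ)) : ℂ)
          * (1 + xbar d) ^ n
      = xbar d ^ k := by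
  rw [← Finset.sum_subset (Finset.range_subset_range.2 (Nat.succ_le_succ hk))
      (fun n _ hn => by
        have hkn : k < n := by
          simpa using fun h => hn (Finset.mem_range.2 (Nat.lt_succ_of_le h))
        simp [Nat.choose_eq_zero_of_lt hkn])]
  have hx : xbar d ^ k = ((1 + xbar d) - 1) ^ k := by rw [add_sub_cancel_left]
  rw [hx, sub_pow]
  refine Finset.sum_congr rfl fun n hn => ?_
  have hnk : n ≤ k := Nat.lt_succ_iff.1 (Finset.mem_range.1 hn)
  rw [show ((k:ℤ) - (n:ℤ)) = ((k - n : ℕ) : ℤ) from by omega, zpow_natCast]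
  have hsign : (-1 : Atrunc d) ^ (n+k) = (-1 : Atrunc d) ^ (k-n) := by
    rw [show n+k = (k-n)+2*n from by omega, pow_add, pow_mul]
    norm_num
  push_cast
  rw [hsign]
  ring

theorem stmt8 (d s N : ℕ) (hN : 1 ≤ N) (c : ℕ → ℚ)
    (hc : ∀ n, c n = ∑ k ∈ Finset.range (d + 1),
      (-1 : ℚ) ^ ((k : ℤ) - (n : ℤ)) * genChoose (-(s : ℚ)) k * (k.choose n : ℚ))
    (y : Atrunc d) (hy : y = 1 - Ring.inverse ((1 + xbar d) ^ N)) :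
    ∑ j ∈ Finset.range (d + 1),
        algebraMap ℂ (Atrunc d)
          (((∑ n ∈ Finset.range (d + 1),
              c n * genChoose ((j : ℚ) + ((s : ℚ) + n) / N) j : ℚ) : ℂ)) * y ^ j
      = ∑ j ∈ Finset.range (d + 1), y ^ j := by
  obtain ⟨qc, hqc⟩ := Ideal.Quotient.mk_surjective y
  have hqc' : qmk d qc = y := hqc
  have hN0 : (N : ℚ) ≠ 0 := Nat.cast_ne_zero.2 (by omega)
  have hT : ∀ n : ℕ, (∑ j ∈ Finset.range (d+1),
      algebraMap ℂ (Atrunc d) ((genChoose ((j:ℚ) + ((s:ℚ)+(n:ℚ))/(N:ℚ)) j : ℚ) : ℂ) * y ^ j)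
      = (1 + xbar d) ^ (s + n + N) := by
    intro n
    refine Tn y hy qc hqc' _ (s+n+N) ?_
    push_cast
    field_simp
  have h0 := main_nat (N := N) y hy 0
  simp only [Nat.add_zero, Nat.choose_self, Nat.cast_one, one_mul, zero_add, pow_one] at h0
  rw [h0]
  have hsplit : ∀ j : ℕ, algebraMap ℂ (Atrunc d)
      (((∑ n ∈ Finset.range (d + 1), c n * genChoose ((j : ℚ) + ((s : ℚ) + n) / N) j : ℚ) : ℂ))
      = ∑ n ∈ Finset.range (d+1), algebraMap ℂ (Atrunc d) ((c n : ℂ)) *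
          algebraMap ℂ (Atrunc d) ((genChoose ((j:ℚ) + ((s:ℚ)+(n:ℚ))/(N:ℚ)) j : ℚ) : ℂ) := by
    intro j
    rw [Rat.cast_sum, map_sum]
    exact Finset.sum_congr rfl fun n _ => by rw [Rat.cast_mul, map_mul]
  calc ∑ j ∈ Finset.range (d + 1),
        algebraMap ℂ (Atrunc d)
          (((∑ n ∈ Finset.range (d + 1),
              c n * genChoose ((j : ℚ) + ((s : ℚ) + n) / N) j : ℚ) : ℂ)) * y ^ j
      = ∑ j ∈ Finset.range (d+1), ∑ n ∈ Finset.range (d+1),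
          algebraMap ℂ (Atrunc d) ((c n : ℂ)) *
            (algebraMap ℂ (Atrunc d) ((genChoose ((j:ℚ) + ((s:ℚ)+(n:ℚ))/(N:ℚ)) j : ℚ) : ℂ) * y ^ j) := by
        refine Finset.sum_congr rfl fun j _ => ?_
        rw [hsplit j, Finset.sum_mul]
        exact Finset.sum_congr rfl fun n _ => by rw [mul_assoc]
    _ = ∑ n ∈ Finset.range (d+1), algebraMap ℂ (Atrunc d) ((c n : ℂ)) *
          ∑ j ∈ Finset.range (d+1),
            algebraMap ℂ (Atrunc d) ((genChoose ((j:ℚ) + ((s:ℚ)+(n:ℚ))/(N:ℚ)) j : ℚ) : ℂ) * y ^ j := by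
        rw [Finset.sum_comm]
        exact Finset.sum_congr rfl fun n _ => by rw [Finset.mul_sum]
    _ = ∑ n ∈ Finset.range (d+1), algebraMap ℂ (Atrunc d) ((c n : ℂ)) * (1 + xbar d) ^ (s+n+N) := by
        exact Finset.sum_congr rfl fun n _ => by rw [hT]
    _ = (∑ n ∈ Finset.range (d+1), algebraMap ℂ (Atrunc d) ((c n : ℂ)) * (1 + xbar d) ^ n)
          * (1 + xbar d) ^ (s+N) := by
        rw [Finset.sum_mul]
        refine Finset.sum_congr rfl fun n _ => ?_
        have hp : (1 + xbar d) ^ (s+n+N) = (1 + xbar d) ^ n * (1 + xbar d) ^ (s+N) := by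
          rw [← pow_add]
          congr 1
          omega
        rw [hp, mul_assoc]
    _ = (qmk d (Epoly d (-(s:ℚ)))) * (1 + xbar d) ^ (s+N) := by
        congr 1
        have hEp : qmk d (Epoly d (-(s:ℚ)))
            = ∑ k ∈ Finset.range (d+1),
                algebraMap ℂ (Atrunc d) ((genChoose (-(s:ℚ)) k : ℚ) : ℂ) * xbar d ^ k := by
          rw [Epoly, map_sum]
          refine Finset.sum_congr rfl fun k _ => ?_
          rw [map_mul, map_pow, qmk_X, ← Ideal.Quotient.mk_algebraMap]
          rfl
        rw [hEp]
        calc ∑ n ∈ Finset.range (d+1), algebraMap ℂ (Atrunc d) ((c n : ℂ)) * (1 + xbar d) ^ n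
            = ∑ n ∈ Finset.range (d+1), ∑ k ∈ Finset.range (d+1),
                algebraMap ℂ (Atrunc d) ((genChoose (-(s:ℚ)) k : ℚ) : ℂ) *
                  (algebraMap ℂ (Atrunc d) ((((-1:ℚ) ^ ((k:ℤ) - (n:ℤ)) * (k.choose n : ℚ) : ℚ)) : ℂ)
                    * (1 + xbar d) ^ n) := by
              refine Finset.sum_congr rfl fun n _ => ?_
              rw [hc n, Rat.cast_sum, map_sum, Finset.sum_mul]
              refine Finset.sum_congr rfl fun k _ => ?_
              rw [show ((-1 : ℚ) ^ ((k : ℤ) - (n : ℤ)) * genChoose (-(s : ℚ)) k * (k.choose n : ℚ))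
                  = genChoose (-(s : ℚ)) k * ((-1:ℚ) ^ ((k:ℤ) - (n:ℤ)) * (k.choose n : ℚ)) from by ring,
                Rat.cast_mul, map_mul, mul_assoc]
          _ = ∑ k ∈ Finset.range (d+1),
                algebraMap ℂ (Atrunc d) ((genChoose (-(s:ℚ)) k : ℚ) : ℂ) *
                  ∑ n ∈ Finset.range (d+1),
                    algebraMap ℂ (Atrunc d) ((((-1:ℚ) ^ ((k:ℤ) - (n:ℤ)) * (k.choose n : ℚ) : ℚ)) : ℂ)
                      * (1 + xbar d) ^ n := by
              rw [Finset.sum_comm]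
              exact Finset.sum_congr rfl fun k _ => by rw [Finset.mul_sum]
          _ = ∑ k ∈ Finset.range (d+1),
                algebraMap ℂ (Atrunc d) ((genChoose (-(s:ℚ)) k : ℚ) : ℂ) * xbar d ^ k := by
              refine Finset.sum_congr rfl fun k hk => ?_
              rw [inner_sub d k (Nat.lt_succ_iff.1 (Finset.mem_range.1 hk))]
    _ = (1 + xbar d) ^ N := by
        have hp : (1 + xbar d) ^ (s+N) = (1 + xbar d) ^ s * (1 + xbar d) ^ N := pow_add _ _ _
        rw [hp, ← mul_assoc, Epow s, one_mul]
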